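/- Let ℬ_1,…,ℬ_k be pairwise disjoint closed sub-arrangements of a set-arrangement 𝒜 on X with ⋃_i ℬ_i = 𝒜, and let L be a Lie algebra of 𝒜. Then π_{ℬ_i}' ∘ s_{ℬ_j}' = 0 for i ≠ j, π' ∘ s' = id on ⊕_i L_{ℬ_i}', π' is surjective, s' is injective, and the C-submodule im(s') = Σ_i im(s_{ℬ_i}') of L' is an internal direct sum of the submodules im(s_{ℬ_i}'). -/

import Mathlib

open FreeLieAlgebra

/-- A set-arrangement on `X`: every member has at least two elements, two distinct members
meet in at most one element, and the union of all members is `X`. -/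
def IsSetArrangement {X : Type*} (𝒜 : Set (Set X)) : Prop :=
  (∀ A ∈ 𝒜, 2 ≤ A.ncard) ∧
    (∀ A ∈ 𝒜, ∀ B ∈ 𝒜, A ≠ B → (A ∩ B).Subsingleton) ∧
    ⋃₀ 𝒜 = Set.univ

variable (C : Type*) [CommRing C] {X : Type*}

/-- The inclusion `F(A) → F(X)` of free Lie algebras. -/
noncomputable def inclX (A : Set X) : FreeLieAlgebra C A →ₗ⁅C⁆ FreeLieAlgebra C X :=
  FreeLieAlgebra.lift C fun a => FreeLieAlgebra.of C (a : X)

/-- The inclusion `F(A) → F(S)` of free Lie algebras along `A ⊆ S`. -/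
noncomputable def inclSub {A S : Set X} (h : A ⊆ S) :
    FreeLieAlgebra C A →ₗ⁅C⁆ FreeLieAlgebra C S :=
  FreeLieAlgebra.lift C fun a => FreeLieAlgebra.of C (⟨a.1, h a.2⟩ : S)

/-- Admissibility of the relations: `R_A ⊆ [F(A), F(A)]`. -/
def AdmissibleRel (𝒜 : Set (Set X)) (Rel : ∀ A : Set X, Set (FreeLieAlgebra C A)) : Prop :=
  ∀ A ∈ 𝒜, Rel A ⊆ (LieAlgebra.derivedSeries C (FreeLieAlgebra C A) 1 : Set (FreeLieAlgebra C A))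

/-- The defining ideal of a Lie algebra of a set-arrangement: generated by all `⁅x,y⁆` for
pairs not contained in any member of `𝒜`, together with the relations `R_A`, `A ∈ 𝒜`. -/
noncomputable def definingIdeal (𝒜 : Set (Set X)) (Rel : ∀ A : Set X, Set (FreeLieAlgebra C A)) :
    LieIdeal C (FreeLieAlgebra C X) :=
  LieSubmodule.lieSpan C (FreeLieAlgebra C X)
    ({z | ∃ x y : X, (∀ A ∈ 𝒜, ¬({x, y} : Set X) ⊆ A) ∧ z = ⁅of C x, of C y⁆} ∪
      ⋃ A, ⋃ (_ : A ∈ 𝒜), inclX C A '' Rel A)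

/-- The Lie algebra `L` of the set-arrangement `𝒜` with relations `Rel`. -/
noncomputable abbrev ArrLie (𝒜 : Set (Set X)) (Rel : ∀ A : Set X, Set (FreeLieAlgebra C A)) :=
  FreeLieAlgebra C X ⧸ definingIdeal C 𝒜 Rel

/-- The quotient map `F(X) → L`. -/
noncomputable def arrMk (𝒜 : Set (Set X)) (Rel : ∀ A : Set X, Set (FreeLieAlgebra C A)) :
    FreeLieAlgebra C X → ArrLie C 𝒜 Rel :=
  LieSubmodule.Quotient.mk (N := definingIdeal C 𝒜 Rel)

/-- The ideal `⟨R_A⟩` of `F(A)`. -/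
noncomputable def locIdeal (A : Set X) (Rel : ∀ A : Set X, Set (FreeLieAlgebra C A)) :
    LieIdeal C (FreeLieAlgebra C A) :=
  LieSubmodule.lieSpan C (FreeLieAlgebra C A) (Rel A)

/-- The localized Lie algebra `L_A = F(A)/⟨R_A⟩`. -/
noncomputable abbrev LocLie (A : Set X) (Rel : ∀ A : Set X, Set (FreeLieAlgebra C A)) :=
  FreeLieAlgebra C A ⧸ locIdeal C A Rel

/-- The quotient map `F(A) → L_A`. -/
noncomputable def locMk (A : Set X) (Rel : ∀ A : Set X, Set (FreeLieAlgebra C A)) :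
    FreeLieAlgebra C A → LocLie C A Rel :=
  LieSubmodule.Quotient.mk (N := locIdeal C A Rel)

open Classical in
/-- The canonical Lie algebra map `F(X) → L_A` killing the generators outside `A`. -/
noncomputable def locProj (A : Set X) (Rel : ∀ A : Set X, Set (FreeLieAlgebra C A)) :
    FreeLieAlgebra C X →ₗ⁅C⁆ LocLie C A Rel :=
  FreeLieAlgebra.lift C fun x : X =>
    if h : x ∈ A then locMk C A Rel (of C (⟨x, h⟩ : A)) else 0

/-- The replacement condition. -/
def ReplacementCond (𝒜 : Set (Set X)) (Rel : ∀ A : Set X, Set (FreeLieAlgebra C A)) : Prop :=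
  ∀ A ∈ 𝒜, 3 ≤ A.ncard → ∀ x ∈ A, (∃ B ∈ 𝒜, B ≠ A ∧ x ∈ B) →
    (LieAlgebra.derivedSeries C (LocLie C A Rel) 1 : Set (LocLie C A Rel)) ⊆
      (LieSubalgebra.lieSpan C (LocLie C A Rel)
        {z | ∃ a : A, (a : X) ≠ x ∧ z = locMk C A Rel (of C a)} : Set (LocLie C A Rel))

/-- Lie monomials of weight `n` with respect to a weighting `d` of the generators. -/
inductive IsLieMonomial (d : X → ℕ) : FreeLieAlgebra C X → ℕ → Prop
  | of (x : X) : IsLieMonomial d (of C x) (d x)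
  | lie {u v : FreeLieAlgebra C X} {m n : ℕ} :
      IsLieMonomial d u m → IsLieMonomial d v n → IsLieMonomial d ⁅u, v⁆ (m + n)

/-- Homogeneity of an element of the free Lie algebra with respect to a weighting. -/
def IsHomogeneous (d : X → ℕ) (r : FreeLieAlgebra C X) : Prop :=
  ∃ n : ℕ, r ∈ Submodule.span C {u | IsLieMonomial C d u n}

/-- The support of a sub-arrangement. -/
def arrSupp {X : Type*} (ℬ : Set (Set X)) : Set X := ⋃₀ ℬ

/-- `ℬ` is a closed sub-arrangement of `𝒜`. -/
def IsClosedSub {X : Type*} (𝒜 ℬ : Set (Set X)) : Prop :=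
  ℬ ⊆ 𝒜 ∧ ∀ A ∈ 𝒜, A ∉ ℬ → (A ∩ arrSupp ℬ).Subsingleton

/-- The relations `R_ℬ` of a sub-arrangement. -/
noncomputable def subRel (ℬ : Set (Set X)) (Rel : ∀ A : Set X, Set (FreeLieAlgebra C A)) :
    Set (FreeLieAlgebra C (arrSupp ℬ)) :=
  (⋃ B, ⋃ h : B ∈ ℬ, inclSub C (Set.subset_sUnion_of_mem h) '' Rel B) ∪
    {z | ∃ x y : arrSupp ℬ, (∀ B ∈ ℬ, ¬({(x : X), (y : X)} : Set X) ⊆ B) ∧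
      z = ⁅of C x, of C y⁆}

/-- The ideal `⟨R_ℬ⟩` of `F(supp ℬ)`. -/
noncomputable def subIdeal (ℬ : Set (Set X)) (Rel : ∀ A : Set X, Set (FreeLieAlgebra C A)) :
    LieIdeal C (FreeLieAlgebra C (arrSupp ℬ)) :=
  LieSubmodule.lieSpan C (FreeLieAlgebra C (arrSupp ℬ)) (subRel C ℬ Rel)

/-- The localized Lie algebra `L_ℬ` at a sub-arrangement. -/
noncomputable abbrev SubLie (ℬ : Set (Set X)) (Rel : ∀ A : Set X, Set (FreeLieAlgebra C A)) :=
  FreeLieAlgebra C (arrSupp ℬ) ⧸ subIdeal C ℬ Rel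

/-- The quotient map `F(supp ℬ) → L_ℬ`. -/
noncomputable def subMk (ℬ : Set (Set X)) (Rel : ∀ A : Set X, Set (FreeLieAlgebra C A)) :
    FreeLieAlgebra C (arrSupp ℬ) → SubLie C ℬ Rel :=
  LieSubmodule.Quotient.mk (N := subIdeal C ℬ Rel)

open Classical in
/-- The canonical Lie algebra map `F(X) → L_ℬ` killing the generators outside `supp ℬ`. -/
noncomputable def subProj (ℬ : Set (Set X)) (Rel : ∀ A : Set X, Set (FreeLieAlgebra C A)) :
    FreeLieAlgebra C X →ₗ⁅C⁆ SubLie C ℬ Rel :=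
  FreeLieAlgebra.lift C fun x : X =>
    if h : x ∈ arrSupp ℬ then subMk C ℬ Rel (of C (⟨x, h⟩ : arrSupp ℬ)) else 0


section AuxLemmas

variable {C₀ : Type*} [CommRing C₀]

/-- Quotient by a Lie ideal as a Lie algebra homomorphism. -/
noncomputable def qmk {L : Type*} [LieRing L] [LieAlgebra C₀ L] (I : LieIdeal C₀ L) :
    L →ₗ⁅C₀⁆ L ⧸ I :=
  { (I : Submodule C₀ L).mkQ with map_lie' := fun {_ _} => rfl }

lemma qmk_surjective {L : Type*} [LieRing L] [LieAlgebra C₀ L] (I : LieIdeal C₀ L) :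
    Function.Surjective (qmk (C₀ := C₀) I) := Quot.mk_surjective

lemma mem_derived_map {L L' : Type*} [LieRing L] [LieAlgebra C₀ L] [LieRing L'] [LieAlgebra C₀ L']
    (f : L →ₗ⁅C₀⁆ L') {z : L} (hz : z ∈ LieAlgebra.derivedSeries C₀ L 1) :
    f z ∈ LieAlgebra.derivedSeries C₀ L' 1 :=
  LieIdeal.derivedSeries_map_le 1 (LieIdeal.mem_map hz)

lemma span_bracket_zero {L : Type*} [LieRing L] [LieAlgebra C₀ L] (s : Set L)
    (h : ∀ a ∈ s, ∀ b ∈ s, ⁅a, b⁆ = 0) :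
    ∀ u ∈ Submodule.span C₀ s, ∀ v ∈ Submodule.span C₀ s, ⁅u, v⁆ = 0 := by
  intro u hu
  refine Submodule.span_induction (p := fun u _ => ∀ v ∈ Submodule.span C₀ s, ⁅u, v⁆ = 0)
    (fun a ha => ?_) (by simp) (fun x y _ _ hx hy v hv => ?_) (fun c x _ hx v hv => ?_) hu
  · intro v hv
    refine Submodule.span_induction (p := fun v _ => ⁅a, v⁆ = 0)
      (fun b hb => h a ha b hb) (by simp)
      (fun x y _ _ hx hy => show ⁅a, x + y⁆ = 0 by rw [lie_add, hx, hy, add_zero])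
      (fun c x _ hx => show ⁅a, c • x⁆ = 0 by rw [lie_smul, hx, smul_zero]) hv
  · rw [add_lie, hx v hv, hy v hv, add_zero]
  · rw [smul_lie, hx v hv, smul_zero]

lemma derived_to_zero {L L' : Type*} [LieRing L] [LieAlgebra C₀ L] [LieRing L'] [LieAlgebra C₀ L']
    (f : L →ₗ⁅C₀⁆ L') (h : ∀ u v : L, ⁅f u, f v⁆ = 0) :
    ∀ z ∈ LieAlgebra.derivedSeries C₀ L 1, f z = 0 := by
  intro z hz
  have h1 : z ∈ (⁅(⊤ : LieIdeal C₀ L), (⊤ : LieIdeal C₀ L)⁆ : LieIdeal C₀ L) := hz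
  rw [← LieSubmodule.mem_toSubmodule, LieSubmodule.lieIdeal_oper_eq_linear_span'] at h1
  refine Submodule.span_induction (p := fun z _ => f z = 0) ?_ (f.map_zero)
    (fun x y _ _ hx hy => show f (x + y) = 0 by rw [map_add, hx, hy, add_zero])
    (fun c x _ hx => show f (c • x) = 0 by rw [map_smul, hx, smul_zero]) h1
  rintro w ⟨x, -, n, -, rfl⟩
  rw [LieHom.map_lie]; exact h x n

end AuxLemmas

/-- For pairwise disjoint closed sub-arrangements `ℬ₁, …, ℬ_k` covering `𝒜`:
`π_{ℬ_i}' ∘ s_{ℬ_j}' = 0` for `i ≠ j`, `π' ∘ s' = id` on `⊕_i L_{ℬ_i}'`, `π'` is surjective,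
`s'` is injective, and the submodule `im(s') = Σ_i im(s_{ℬ_i}')` of `L'` is an internal
direct sum. -/
theorem statement14 {C : Type*} [CommRing C] {X : Type*} [Fintype X]
    (𝒜 : Set (Set X)) (Rel : ∀ A : Set X, Set (FreeLieAlgebra C A))
    (h𝒜 : IsSetArrangement 𝒜) (hRel : AdmissibleRel C 𝒜 Rel)
    (k : ℕ) (ℬ : Fin k → Set (Set X))
    (hclosed : ∀ i, IsClosedSub 𝒜 (ℬ i))
    (hdisj : ∀ i j, i ≠ j → ℬ i ∩ ℬ j = ∅)
    (hcover : ⋃ i, ℬ i = 𝒜)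
    (s : ∀ i, SubLie C (ℬ i) Rel →ₗ⁅C⁆ ArrLie C 𝒜 Rel)
    (hs : ∀ i, ∀ a : arrSupp (ℬ i),
      s i (subMk C (ℬ i) Rel (of C a)) = arrMk C 𝒜 Rel (of C (a : X)))
    (π : ∀ i, ArrLie C 𝒜 Rel →ₗ⁅C⁆ SubLie C (ℬ i) Rel)
    (hπ₁ : ∀ i, ∀ a : arrSupp (ℬ i),
      π i (arrMk C 𝒜 Rel (of C (a : X))) = subMk C (ℬ i) Rel (of C a))
    (hπ₂ : ∀ i, ∀ x : X, x ∉ arrSupp (ℬ i) → π i (arrMk C 𝒜 Rel (of C x)) = 0) :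
    -- `π_{ℬ_i}' ∘ s_{ℬ_j}' = 0` for `i ≠ j`
    (∀ i j, i ≠ j →
      ∀ z ∈ (LieAlgebra.derivedSeries C (SubLie C (ℬ j) Rel) 1 : Set (SubLie C (ℬ j) Rel)),
        π i (s j z) = 0) ∧
    -- `π' ∘ s' = id` on `⊕_i L_{ℬ_i}'`
    (∀ z : ∀ i, SubLie C (ℬ i) Rel,
      (∀ i, z i ∈ LieAlgebra.derivedSeries C (SubLie C (ℬ i) Rel) 1) →
      ∀ j, π j (∑ i, s i (z i)) = z j) ∧
    -- `π'` is surjective onto `⊕_i L_{ℬ_i}'`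
    (∀ w : ∀ i, SubLie C (ℬ i) Rel,
      (∀ i, w i ∈ LieAlgebra.derivedSeries C (SubLie C (ℬ i) Rel) 1) →
      ∃ u ∈ LieAlgebra.derivedSeries C (ArrLie C 𝒜 Rel) 1, ∀ i, π i u = w i) ∧
    -- `s'` is injective
    (∀ z w : ∀ i, SubLie C (ℬ i) Rel,
      (∀ i, z i ∈ LieAlgebra.derivedSeries C (SubLie C (ℬ i) Rel) 1) →
      (∀ i, w i ∈ LieAlgebra.derivedSeries C (SubLie C (ℬ i) Rel) 1) →
      ∑ i, s i (z i) = ∑ i, s i (w i) → z = w) ∧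
    -- the sum `Σ_i im(s_{ℬ_i}')` is direct
    (∀ r : Fin k → ArrLie C 𝒜 Rel,
      (∀ i, r i ∈ s i ''
        (LieAlgebra.derivedSeries C (SubLie C (ℬ i) Rel) 1 : Set (SubLie C (ℬ i) Rel))) →
      ∑ i, r i = 0 → ∀ i, r i = 0) := by
    classical
  -- π i ∘ s i = id
  have hid : ∀ i (x : SubLie C (ℬ i) Rel), π i (s i x) = x := by
    intro i x
    obtain ⟨u, rfl⟩ := qmk_surjective (subIdeal C (ℬ i) Rel) x
    have key : ((π i).comp (s i)).comp (qmk (subIdeal C (ℬ i) Rel)) =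
        qmk (subIdeal C (ℬ i) Rel) := by
      refine FreeLieAlgebra.hom_ext fun a => ?_
      show π i (s i (subMk C (ℬ i) Rel (of C a))) = subMk C (ℬ i) Rel (of C a)
      rw [hs i a, hπ₁ i a]
    exact LieHom.congr_fun key u
  -- π i ∘ s j kills the derived subalgebra when i ≠ j
  have hkill : ∀ i j, i ≠ j →
      ∀ z ∈ (LieAlgebra.derivedSeries C (SubLie C (ℬ j) Rel) 1 : Set (SubLie C (ℬ j) Rel)),
        π i (s j z) = 0 := by
    intro i j hij
    set φ : SubLie C (ℬ j) Rel →ₗ⁅C⁆ SubLie C (ℬ i) Rel := (π i).comp (s j) with hφ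
    set g : arrSupp (ℬ j) → SubLie C (ℬ i) Rel :=
      fun a => π i (arrMk C 𝒜 Rel (of C (a : X))) with hgdef
    have hgg : ∀ a b, ⁅g a, g b⁆ = 0 := by
      intro a b
      by_cases ha : (a : X) ∈ arrSupp (ℬ i)
      · by_cases hb : (b : X) ∈ arrSupp (ℬ i)
        · have hga : g a = subMk C (ℬ i) Rel (of C (⟨a, ha⟩ : arrSupp (ℬ i))) := hπ₁ i ⟨a, ha⟩
          have hgb : g b = subMk C (ℬ i) Rel (of C (⟨b, hb⟩ : arrSupp (ℬ i))) := hπ₁ i ⟨b, hb⟩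
          rw [hga, hgb]
          by_cases hB : ∃ B ∈ ℬ i, ({(a : X), (b : X)} : Set X) ⊆ B
          · obtain ⟨B, hBi, hab⟩ := hB
            have hBA : B ∈ 𝒜 := (hclosed i).1 hBi
            have hBj : B ∉ ℬ j := fun hBj =>
              Set.eq_empty_iff_forall_notMem.mp (hdisj i j hij) B ⟨hBi, hBj⟩
            have hss := (hclosed j).2 B hBA hBj
            have hab' : (a : X) = (b : X) :=
              hss ⟨hab (Set.mem_insert _ _), a.2⟩
                ⟨hab (Set.mem_insert_of_mem _ (Set.mem_singleton _)), b.2⟩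
            have heq : (⟨(a : X), ha⟩ : arrSupp (ℬ i)) = ⟨(b : X), hb⟩ := Subtype.ext hab'
            rw [heq]
            exact lie_self _
          · have hrel : (⁅of C (⟨(a : X), ha⟩ : arrSupp (ℬ i)),
                of C (⟨(b : X), hb⟩ : arrSupp (ℬ i))⁆ :
                FreeLieAlgebra C (arrSupp (ℬ i))) ∈ subIdeal C (ℬ i) Rel := by
              apply LieSubmodule.subset_lieSpan
              exact Or.inr ⟨⟨(a : X), ha⟩, ⟨(b : X), hb⟩,
                fun B hBi hsub => hB ⟨B, hBi, hsub⟩, rfl⟩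
            have : subMk C (ℬ i) Rel (⁅of C (⟨(a : X), ha⟩ : arrSupp (ℬ i)),
                of C (⟨(b : X), hb⟩ : arrSupp (ℬ i))⁆) = 0 :=
              (LieSubmodule.Quotient.mk_eq_zero _).2 hrel
            rw [← this]
            rfl
        · rw [show g b = 0 from hπ₂ i (b : X) hb, lie_zero]
      · rw [show g a = 0 from hπ₂ i (a : X) ha, zero_lie]
    -- the image of φ lies in the span of the `g a`
    set K : LieSubalgebra C (SubLie C (ℬ i) Rel) :=
      { Submodule.span C (Set.range g) with
        lie_mem' := fun {x y} hx hy => by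
          have h0 : ⁅x, y⁆ = 0 := span_bracket_zero (Set.range g)
            (by rintro _ ⟨a, rfl⟩ _ ⟨b, rfl⟩; exact hgg a b) x hx y hy
          rw [h0]; exact Submodule.zero_mem _ } with hKdef
    set ψ : FreeLieAlgebra C (arrSupp (ℬ j)) →ₗ⁅C⁆ K :=
      FreeLieAlgebra.lift C
        (fun a => (⟨g a, Submodule.subset_span (Set.mem_range_self a)⟩ : K)) with hψdef
    have hfact : φ.comp (qmk (subIdeal C (ℬ j) Rel)) = K.incl.comp ψ := by
      refine FreeLieAlgebra.hom_ext fun a => ?_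
      show π i (s j (subMk C (ℬ j) Rel (of C a))) = K.incl (ψ (of C a))
      rw [hs j a, hψdef]
      simp only [FreeLieAlgebra.lift_of_apply, LieSubalgebra.coe_incl]
      rfl
    have hK : ∀ u : SubLie C (ℬ j) Rel, φ u ∈ Submodule.span C (Set.range g) := by
      intro u
      obtain ⟨u', rfl⟩ := qmk_surjective (subIdeal C (ℬ j) Rel) u
      have h2 := LieHom.congr_fun hfact u'
      show (φ.comp (qmk (subIdeal C (ℬ j) Rel))) u' ∈ _
      rw [h2]
      exact (ψ u').2
    have hbr : ∀ u v : SubLie C (ℬ j) Rel, ⁅φ u, φ v⁆ = 0 := fun u v =>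
      span_bracket_zero (Set.range g)
        (by rintro _ ⟨a, rfl⟩ _ ⟨b, rfl⟩; exact hgg a b) _ (hK u) _ (hK v)
    intro z hz
    exact derived_to_zero φ hbr z hz
  -- π' ∘ s' = id
  have hsum : ∀ z : ∀ i, SubLie C (ℬ i) Rel,
      (∀ i, z i ∈ LieAlgebra.derivedSeries C (SubLie C (ℬ i) Rel) 1) →
      ∀ j, π j (∑ i, s i (z i)) = z j := by
    intro z hz j
    have h1 : π j (∑ i, s i (z i)) = ∑ i, π j (s i (z i)) :=
      map_sum (π j).toLinearMap _ _
    rw [h1, Finset.sum_eq_single j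
      (fun i _ hij => hkill j i (Ne.symm hij) (z i) (hz i))
      (fun h => absurd (Finset.mem_univ j) h)]
    exact hid j (z j)
  refine ⟨hkill, hsum, ?_, ?_, ?_⟩
  · intro w hw
    refine ⟨∑ i, s i (w i), ?_, fun j => hsum w hw j⟩
    rw [← LieSubmodule.mem_toSubmodule]
    exact Submodule.sum_mem _ fun i _ => by
      rw [LieSubmodule.mem_toSubmodule]; exact mem_derived_map (s i) (hw i)
  · intro z w hz hw heq
    funext j
    have h1 : π j (∑ i, s i (w i)) = z j := heq ▸ hsum z hz j
    exact h1.symm.trans (hsum w hw j)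
  · intro r hr hr0 j
    choose u hu1 hu2 using hr
    have h0 : (∑ i, s i (u i)) = 0 := by
      rw [Finset.sum_congr rfl fun i _ => hu2 i]; exact hr0
    have := hsum u (fun i => hu1 i) j
    rw [h0, map_zero] at this
    rw [← hu2 j, ← this, map_zero]
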